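/- arXiv:math/0608270 — 2 statements merged into one kernel-verified Lean document; each statement's English description precedes it below -/
import Mathlib

section
/- Let C be an arrovian voting system on at least three alternatives. If in some profile the aggregate satisfies a ≈ b (indifference: a ≽ b and b ≽ a), then the set N = {i ∈ I : a ≈_i b} of individually indifferent voters is a strongly decisive subset. -/
variable {A I : Type*}

/-- A partial preorder: a reflexive and transitive binary relation. -/
def IsPPO (P : A → A → Prop) : Prop := Reflexive P ∧ Transitive P

/-- A linear (total) preorder: reflexive, transitive and complete. -/
def IsLPO (P : A → A → Prop) : Prop := Reflexive P ∧ Transitive P ∧ ∀ a b, P a b ∨ P b a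

/-- A profile of partial preorders. -/
def IsPPOProfile (P : I → A → A → Prop) : Prop := ∀ i, IsPPO (P i)

/-- A profile of linear (total) preorders. -/
def IsLPOProfile (P : I → A → A → Prop) : Prop := ∀ i, IsLPO (P i)

/-- Strict preference. -/
def StrictPref (P : A → A → Prop) (a b : A) : Prop := P a b ∧ ¬ P b a

/-- Indifference. -/
def Indiff (P : A → A → Prop) (a b : A) : Prop := P a b ∧ P b a

/-- The set `A` contains at least three distinct alternatives. -/
def ThreeAlts (A : Type*) : Prop := ∃ a b c : A, a ≠ b ∧ b ≠ c ∧ a ≠ c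

/-- Unanimity. -/
def Unanimity (C : (I → A → A → Prop) → A → A → Prop) : Prop :=
  ∀ P, IsPPOProfile P → ∀ a b : A, (∀ i, P i a b) → C P a b

/-- Independence of irrelevant alternatives. -/
def IIA (C : (I → A → A → Prop) → A → A → Prop) : Prop :=
  ∀ P P' : I → A → A → Prop, IsPPOProfile P → IsPPOProfile P' → ∀ a b : A,
    {i | P i a b} = {i | P' i a b} → {i | P i b a} = {i | P' i b a} →
    (C P a b ↔ C P' a b)

/-- Neutrality: `C (ρ*P) = ρ*(C P)` for every permutation `ρ` of the alternatives. -/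
def Neutrality (C : (I → A → A → Prop) → A → A → Prop) : Prop :=
  ∀ (ρ : Equiv.Perm A) (P : I → A → A → Prop), IsPPOProfile P →
    ∀ x y : A, C (fun i a b => P i (ρ.symm a) (ρ.symm b)) x y ↔ C P (ρ.symm x) (ρ.symm y)

/-- Monotonicity. -/
def Monotonicity (C : (I → A → A → Prop) → A → A → Prop) : Prop :=
  ∀ P P' : I → A → A → Prop, IsPPOProfile P → IsPPOProfile P' → ∀ a b : A,
    {i | P i a b} ⊆ {i | P' i a b} → {i | P' i b a} ⊆ {i | P i b a} →
    C P a b → C P' a b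

/-- `J` is a decisive set: unanimous strict preference on `J` forces weak aggregate preference. -/
def Decisive (C : (I → A → A → Prop) → A → A → Prop) (J : Set I) : Prop :=
  ∀ P, IsPPOProfile P → ∀ a b : A, (∀ j ∈ J, StrictPref (P j) a b) → C P a b

/-- `J` is a strongly decisive set: unanimous weak preference on `J` forces weak aggregate preference. -/
def SDecisive (C : (I → A → A → Prop) → A → A → Prop) (J : Set I) : Prop :=
  ∀ P, IsPPOProfile P → ∀ a b : A, (∀ j ∈ J, P j a b) → C P a b


section ArrowAux

/-- A relation on `A` supported on the triple `u, v, w`, with prescribed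
(voter-indexed) truth values on each of the six ordered pairs. -/
def TriRel (u v w : A) (Euv Evu Evw Ewv Euw Ewu : I → Prop) (i : I) : A → A → Prop :=
  fun s t => s = t ∨ (s = u ∧ t = v ∧ Euv i) ∨ (s = v ∧ t = u ∧ Evu i) ∨
    (s = v ∧ t = w ∧ Evw i) ∨ (s = w ∧ t = v ∧ Ewv i) ∨
    (s = u ∧ t = w ∧ Euw i) ∨ (s = w ∧ t = u ∧ Ewu i)

lemma triRel_profile {u v w : A} (huv : u ≠ v) (hvw : v ≠ w) (huw : u ≠ w)
    {Euv Evu Evw Ewv Euw Ewu : I → Prop}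
    (c1 : ∀ i, Euv i → Evw i → Euw i) (c2 : ∀ i, Euw i → Ewv i → Euv i)
    (c3 : ∀ i, Evu i → Euw i → Evw i) (c4 : ∀ i, Evw i → Ewu i → Evu i)
    (c5 : ∀ i, Ewu i → Euv i → Ewv i) (c6 : ∀ i, Ewv i → Evu i → Ewu i) :
    IsPPOProfile (fun i => TriRel u v w Euv Evu Evw Ewv Euw Ewu i) := by
  intro i
  constructor
  · intro s; exact Or.inl rfl
  · intro s t r h1 h2
    have k1 := c1 i; have k2 := c2 i; have k3 := c3 i
    have k4 := c4 i; have k5 := c5 i; have k6 := c6 i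
    rcases h1 with rfl | ⟨rfl, rfl, h⟩ | ⟨rfl, rfl, h⟩ | ⟨rfl, rfl, h⟩ |
      ⟨rfl, rfl, h⟩ | ⟨rfl, rfl, h⟩ | ⟨rfl, rfl, h⟩
    · exact h2
    all_goals (
      rcases h2 with rfl | ⟨e, rfl, h'⟩ | ⟨e, rfl, h'⟩ | ⟨e, rfl, h'⟩ |
        ⟨e, rfl, h'⟩ | ⟨e, rfl, h'⟩ | ⟨e, rfl, h'⟩ <;>
      unfold TriRel <;>
      simp_all <;>
      tauto)

lemma triRel_uv {u v w : A} (huv : u ≠ v) (hvw : v ≠ w) (huw : u ≠ w)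
    (Euv Evu Evw Ewv Euw Ewu : I → Prop) :
    {i | TriRel u v w Euv Evu Evw Ewv Euw Ewu i u v} = {i | Euv i} := by
  ext i
  simp [TriRel, huv, hvw, huw, huv.symm, hvw.symm, huw.symm]

lemma triRel_vu {u v w : A} (huv : u ≠ v) (hvw : v ≠ w) (huw : u ≠ w)
    (Euv Evu Evw Ewv Euw Ewu : I → Prop) :
    {i | TriRel u v w Euv Evu Evw Ewv Euw Ewu i v u} = {i | Evu i} := by
  ext i
  simp [TriRel, huv, hvw, huw, huv.symm, hvw.symm, huw.symm]

lemma triRel_vw {u v w : A} (huv : u ≠ v) (hvw : v ≠ w) (huw : u ≠ w)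
    (Euv Evu Evw Ewv Euw Ewu : I → Prop) :
    {i | TriRel u v w Euv Evu Evw Ewv Euw Ewu i v w} = {i | Evw i} := by
  ext i
  simp [TriRel, huv, hvw, huw, huv.symm, hvw.symm, huw.symm]

lemma triRel_wv {u v w : A} (huv : u ≠ v) (hvw : v ≠ w) (huw : u ≠ w)
    (Euv Evu Evw Ewv Euw Ewu : I → Prop) :
    {i | TriRel u v w Euv Evu Evw Ewv Euw Ewu i w v} = {i | Ewv i} := by
  ext i
  simp [TriRel, huv, hvw, huw, huv.symm, hvw.symm, huw.symm]

lemma triRel_uw {u v w : A} (huv : u ≠ v) (hvw : v ≠ w) (huw : u ≠ w)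
    (Euv Evu Evw Ewv Euw Ewu : I → Prop) :
    {i | TriRel u v w Euv Evu Evw Ewv Euw Ewu i u w} = {i | Euw i} := by
  ext i
  simp [TriRel, huv, hvw, huw, huv.symm, hvw.symm, huw.symm]

lemma triRel_wu {u v w : A} (huv : u ≠ v) (hvw : v ≠ w) (huw : u ≠ w)
    (Euv Evu Evw Ewv Euw Ewu : I → Prop) :
    {i | TriRel u v w Euv Evu Evw Ewv Euw Ewu i w u} = {i | Ewu i} := by
  ext i
  simp [TriRel, huv, hvw, huw, huv.symm, hvw.symm, huw.symm]

/-- A "token": a profile whose aggregate is indifferent between `u` and `v`,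
and whose supporting voter sets for the pair are exactly `S₁`, `S₂`. -/
def Tok (C : (I → A → A → Prop) → A → A → Prop) (S₁ S₂ : Set I) (u v : A) : Prop :=
  ∃ W : I → A → A → Prop, IsPPOProfile W ∧ C W u v ∧ C W v u ∧
    {i | W i u v} = S₁ ∧ {i | W i v u} = S₂

lemma tok_symm {C : (I → A → A → Prop) → A → A → Prop} {S₁ S₂ : Set I} {u v : A}
    (h : Tok C S₁ S₂ u v) : Tok C S₂ S₁ v u := by
  obtain ⟨W, h1, h2, h3, h4, h5⟩ := h
  exact ⟨W, h1, h3, h2, h5, h4⟩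

lemma tok_clone {C : (I → A → A → Prop) → A → A → Prop}
    (hC : ∀ P, IsPPOProfile P → IsPPO (C P)) (hU : Unanimity C) (hIIA : IIA C)
    {S₁ S₂ : Set I} {u v w : A} (hwu : w ≠ u) (hwv : w ≠ v)
    (h : Tok C S₁ S₂ u v) : Tok C S₁ S₂ u w := by
  classical
  obtain ⟨W, hW, hWuv, hWvu, hs1, hs2⟩ := h
  set σ : A → A := fun t => if t = w then v else t with hσ
  set W' : I → A → A → Prop := fun i s t => W i (σ s) (σ t) with hW'
  have hW'p : IsPPOProfile W' := by
    intro i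
    exact ⟨fun s => (hW i).1 (σ s), fun s t r h1 h2 => (hW i).2 h1 h2⟩
  have hσu : σ u = u := by simp [hσ, hwu.symm]
  have hσv : σ v = v := by simp [hσ, hwv.symm]
  have hσw : σ w = v := by simp [hσ]
  have e1 : {i | W' i u v} = {i | W i u v} := by
    ext i; simp only [hW', Set.mem_setOf_eq, hσu, hσv]
  have e2 : {i | W' i v u} = {i | W i v u} := by
    ext i; simp only [hW', Set.mem_setOf_eq, hσu, hσv]
  have hiff := hIIA W' W hW'p hW u v e1 e2
  have hiff' := hIIA W' W hW'p hW v u e2 e1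
  have hb1 : C W' u v := hiff.mpr hWuv
  have hb2 : C W' v u := hiff'.mpr hWvu
  have hb3 : C W' w v := by
    apply hU W' hW'p
    intro i
    show W i (σ w) (σ v) ; rw [hσw, hσv]; exact (hW i).1 v
  have hb4 : C W' v w := by
    apply hU W' hW'p
    intro i
    show W i (σ v) (σ w) ; rw [hσw, hσv]; exact (hW i).1 v
  have htr := (hC W' hW'p).2
  refine ⟨W', hW'p, htr hb1 hb4, htr hb3 hb2, ?_, ?_⟩
  · rw [show {i | W' i u w} = {i | W i u v} from by
      ext i; simp only [hW', Set.mem_setOf_eq, hσu, hσw]]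
    exact hs1
  · rw [show {i | W' i w u} = {i | W i v u} from by
      ext i; simp only [hW', Set.mem_setOf_eq, hσu, hσw]]
    exact hs2

lemma tok_shrink {C : (I → A → A → Prop) → A → A → Prop}
    (hC : ∀ P, IsPPOProfile P → IsPPO (C P)) (hIIA : IIA C)
    {S₁ S₂ : Set I} {u v w : A} (huv : u ≠ v) (hvw : v ≠ w) (huw : u ≠ w)
    (h1 : Tok C S₁ S₂ u v) (h2 : Tok C S₁ S₂ w v) :
    Tok C (S₁ ∩ S₂) (S₁ ∩ S₂) u w := by
  obtain ⟨W₁, hW₁, hW₁uv, hW₁vu, hs11, hs12⟩ := h1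
  obtain ⟨W₂, hW₂, hW₂wv, hW₂vw, hs21, hs22⟩ := h2
  set E1 : I → Prop := fun i => i ∈ S₁ with hE1
  set E2 : I → Prop := fun i => i ∈ S₂ with hE2
  set E3 : I → Prop := fun i => i ∈ S₁ ∧ i ∈ S₂ with hE3
  set V : I → A → A → Prop := fun i => TriRel u v w E1 E2 E2 E1 E3 E3 i with hV
  have hVp : IsPPOProfile V := by
    apply triRel_profile huv hvw huw <;> (intro i h h'; first | exact ⟨h, h'⟩ | exact ⟨h', h⟩ | exact h.1 | exact h.2 | tauto)
  have euv : {i | V i u v} = S₁ := by rw [hV, triRel_uv huv hvw huw]; rfl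
  have evu : {i | V i v u} = S₂ := by rw [hV, triRel_vu huv hvw huw]; rfl
  have evw : {i | V i v w} = S₂ := by rw [hV, triRel_vw huv hvw huw]; rfl
  have ewv : {i | V i w v} = S₁ := by rw [hV, triRel_wv huv hvw huw]; rfl
  have euw : {i | V i u w} = S₁ ∩ S₂ := by
    rw [hV, triRel_uw huv hvw huw]; ext i; simp [hE3]
  have ewu : {i | V i w u} = S₁ ∩ S₂ := by
    rw [hV, triRel_wu huv hvw huw]; ext i; simp [hE3]
  have hiff1 := hIIA V W₁ hVp hW₁ u v (euv.trans hs11.symm) (evu.trans hs12.symm)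
  have hiff1' := hIIA V W₁ hVp hW₁ v u (evu.trans hs12.symm) (euv.trans hs11.symm)
  have hiff2 := hIIA V W₂ hVp hW₂ w v (ewv.trans hs21.symm) (evw.trans hs22.symm)
  have hiff2' := hIIA V W₂ hVp hW₂ v w (evw.trans hs22.symm) (ewv.trans hs21.symm)
  have hVuv : C V u v := hiff1.mpr hW₁uv
  have hVvu : C V v u := hiff1'.mpr hW₁vu
  have hVwv : C V w v := hiff2.mpr hW₂wv
  have hVvw : C V v w := hiff2'.mpr hW₂vw
  have htr := (hC V hVp).2
  exact ⟨V, hVp, htr hVuv hVvw, htr hVwv hVvu, euw, ewu⟩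

lemma tok_spread {C : (I → A → A → Prop) → A → A → Prop}
    (hC : ∀ P, IsPPOProfile P → IsPPO (C P)) (hU : Unanimity C) (hIIA : IIA C)
    {N : Set I} {a c : A} (hac : a ≠ c) (h : Tok C N N a c) :
    ∀ x y : A, x ≠ y → Tok C N N x y := by
  classical
  intro x y hxy
  -- Step A : a token Tok C N N x s with s ≠ x
  obtain ⟨s, hs, hsx⟩ : ∃ s, Tok C N N x s ∧ s ≠ x := by
    by_cases hxa : x = a
    · subst hxa
      exact ⟨c, h, Ne.symm hac⟩
    · by_cases hxc : x = c
      · subst hxc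
        exact ⟨a, tok_symm h, hac⟩
      · exact ⟨a, tok_symm (tok_clone hC hU hIIA hxa hxc h), fun hh => hxa hh.symm⟩
  by_cases hys : y = s
  · rw [hys]; exact hs
  · exact tok_clone hC hU hIIA (fun hh => hxy hh.symm) hys hs

lemma exists_third (hA : ThreeAlts A) (a b : A) : ∃ c : A, c ≠ a ∧ c ≠ b := by
  obtain ⟨p, q, r, hpq, hqr, hpr⟩ := hA
  by_cases hpa : p = a
  · by_cases hqb : q = b
    · exact ⟨r, fun h => hpr (hpa.trans h.symm), fun h => hqr (hqb.trans h.symm)⟩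
    · by_cases hqa : q = a
      · exact absurd (hpa.trans hqa.symm) hpq
      · exact ⟨q, hqa, hqb⟩
  · by_cases hpb : p = b
    · by_cases hqa : q = a
      · exact ⟨r, fun h => hqr (hqa.trans h.symm), fun h => hpr (hpb.trans h.symm)⟩
      · by_cases hqb : q = b
        · exact absurd (hpb.trans hqb.symm) hpq
        · exact ⟨q, hqa, hqb⟩
    · exact ⟨p, hpa, hpb⟩

lemma pair_decisive {C : (I → A → A → Prop) → A → A → Prop}
    (hC : ∀ P, IsPPOProfile P → IsPPO (C P)) (hU : Unanimity C) (hIIA : IIA C)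
    {N : Set I} {x y c : A} (hxy : x ≠ y) (hyc : y ≠ c) (hxc : x ≠ c)
    (htok : Tok C N N x y)
    (Q : I → A → A → Prop) (hQ : IsPPOProfile Q) (hN : ∀ j ∈ N, Q j x y) :
    C Q x y := by
  obtain ⟨T, hT, hTxy, hTyx, hTs1, hTs2⟩ := htok
  set Z : I → Prop := fun i => i ∈ N ∧ Q i y x with hZ
  set EN : I → Prop := fun i => i ∈ N with hEN
  set ET : I → Prop := fun _ => True with hET
  -- W1 : aggregate x ≽ c with pair (x,c) supported on (N, Z)
  set W1 : I → A → A → Prop := fun i => TriRel x y c EN EN ET Z EN Z i with hW1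
  have hW1p : IsPPOProfile W1 := by
    apply triRel_profile hxy hyc hxc <;> (intro i h h'; first | exact trivial | exact h | exact h' | exact h.1 | exact h'.1 | tauto)
  -- W2 : aggregate c ≽ y with pair (c,y) supported on (N, Z)
  set W2 : I → A → A → Prop := fun i => TriRel x y c EN EN Z EN Z ET i with hW2
  have hW2p : IsPPOProfile W2 := by
    apply triRel_profile hxy hyc hxc <;> (intro i h h'; first | exact trivial | exact h | exact h' | exact h.1 | exact h'.1 | tauto)
  -- S : matches Q on (x,y), W1 on (x,c), W2 on (c,y)
  set S : I → A → A → Prop :=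
    fun i => TriRel x y c (fun i => Q i x y) (fun i => Q i y x) Z EN EN Z i with hS
  have hSp : IsPPOProfile S := by
    apply triRel_profile hxy hyc hxc
    · intro i h h'; exact h'.1
    · intro i h h'; exact hN i h
    · intro i h h'; exact ⟨h', h⟩
    · intro i h h'; exact h.2
    · intro i h h'; exact h.1
    · intro i h h'; exact ⟨h, h'⟩
  have htr1 := (hC W1 hW1p).2
  have htr2 := (hC W2 hW2p).2
  have htrS := (hC S hSp).2
  -- aggregate facts for W1
  have w1xy : {i | W1 i x y} = {i | T i x y} := by
    rw [hW1, triRel_uv hxy hyc hxc, hTs1]; rfl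
  have w1yx : {i | W1 i y x} = {i | T i y x} := by
    rw [hW1, triRel_vu hxy hyc hxc, hTs2]; rfl
  have hW1xy : C W1 x y := (hIIA W1 T hW1p hT x y w1xy w1yx).mpr hTxy
  have hW1yc : C W1 y c := by
    apply hU W1 hW1p
    intro i
    exact Or.inr (Or.inr (Or.inr (Or.inl ⟨rfl, rfl, trivial⟩)))
  have hW1xc : C W1 x c := htr1 hW1xy hW1yc
  -- aggregate facts for W2
  have w2xy : {i | W2 i x y} = {i | T i x y} := by
    rw [hW2, triRel_uv hxy hyc hxc, hTs1]; rfl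
  have w2yx : {i | W2 i y x} = {i | T i y x} := by
    rw [hW2, triRel_vu hxy hyc hxc, hTs2]; rfl
  have hW2xy : C W2 x y := (hIIA W2 T hW2p hT x y w2xy w2yx).mpr hTxy
  have hW2cx : C W2 c x := by
    apply hU W2 hW2p
    intro i
    exact Or.inr (Or.inr (Or.inr (Or.inr (Or.inr (Or.inr ⟨rfl, rfl, trivial⟩)))))
  have hW2cy : C W2 c y := htr2 hW2cx hW2xy
  -- transfer to S
  have sxc : {i | W1 i x c} = {i | S i x c} := by
    rw [hW1, hS, triRel_uw hxy hyc hxc, triRel_uw hxy hyc hxc]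
  have scx : {i | W1 i c x} = {i | S i c x} := by
    rw [hW1, hS, triRel_wu hxy hyc hxc, triRel_wu hxy hyc hxc]
  have hSxc : C S x c := (hIIA W1 S hW1p hSp x c sxc scx).mp hW1xc
  have scy : {i | W2 i c y} = {i | S i c y} := by
    rw [hW2, hS, triRel_wv hxy hyc hxc, triRel_wv hxy hyc hxc]
  have syc : {i | W2 i y c} = {i | S i y c} := by
    rw [hW2, hS, triRel_vw hxy hyc hxc, triRel_vw hxy hyc hxc]
  have hScy : C S c y := (hIIA W2 S hW2p hSp c y scy syc).mp hW2cy
  have hSxy : C S x y := htrS hSxc hScy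
  -- transfer to Q
  have qxy : {i | S i x y} = {i | Q i x y} := by
    rw [hS, triRel_uv hxy hyc hxc]
  have qyx : {i | S i y x} = {i | Q i y x} := by
    rw [hS, triRel_vu hxy hyc hxc]
  exact (hIIA S Q hSp hQ x y qxy qyx).mp hSxy

end ArrowAux

theorem strongly_decisive_support [Fintype I] (C : (I → A → A → Prop) → A → A → Prop)
    (hA : ThreeAlts A)
    (hC : ∀ P, IsPPOProfile P → IsPPO (C P))
    (hU : Unanimity C) (hIIA : IIA C) :
    ∀ P : I → A → A → Prop, IsPPOProfile P → ∀ a b : A,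
      C P a b → C P b a → SDecisive C {i | Indiff (P i) a b} := by
  classical
  intro P hP a b hab hba Q hQ x y hxy
  by_cases hxey : x = y
  · exact hxey ▸ (hC Q hQ).1 x
  by_cases haeb : a = b
  · -- N is everything; use unanimity
    subst haeb
    apply hU Q hQ x y
    intro i
    exact hxy i (show Indiff (P i) a a from ⟨(hP i).1 a, (hP i).1 a⟩)
  -- get a third alternative c ∉ {a, b}
  obtain ⟨c, hca, hcb⟩ := exists_third hA a b
  -- basic token from P
  have t0 : Tok C {i | P i a b} {i | P i b a} a b := ⟨P, hP, hab, hba, rfl, rfl⟩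
  have t1 : Tok C {i | P i a b} {i | P i b a} c b :=
    tok_symm (tok_clone hC hU hIIA hcb hca (tok_symm t0))
  have hac : a ≠ c := fun h => hca h.symm
  have hbc : b ≠ c := fun h => hcb h.symm
  have t2 : Tok C ({i | P i a b} ∩ {i | P i b a}) ({i | P i a b} ∩ {i | P i b a}) a c :=
    tok_shrink hC hIIA haeb hbc hac t0 t1
  have hNN : ({i | P i a b} ∩ {i | P i b a}) = {i | Indiff (P i) a b} := by
    ext i; simp [Indiff, Set.mem_inter_iff, Set.mem_setOf_eq]
  rw [hNN] at t2
  have t3 : Tok C {i | Indiff (P i) a b} {i | Indiff (P i) a b} x y :=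
    tok_spread hC hU hIIA hac t2 x y hxey
  -- a third alternative distinct from x and y
  obtain ⟨d, hdx, hdy⟩ := exists_third hA x y
  exact pair_decisive hC hU hIIA hxey (Ne.symm hdy) (Ne.symm hdx) t3 Q hQ hxy
end

section
/- The only arrovian voting systems on at least three alternatives that satisfy anonymity are the trivial voting system C_∅ (declaring all alternatives equivalent) and the strong Pareto rule C_I(P_1,...,P_n) = ⋂_{i∈I} P_i. Only C_I satisfies both anonymity and strong unanimity. -/
variable {A I : Type*}

/-- Anonymity: all individuals are treated symmetrically. -/
def Anonymity (C : (I → A → A → Prop) → A → A → Prop) : Prop :=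
  ∀ (σ : Equiv.Perm I) (P : I → A → A → Prop), IsPPOProfile P →
    ∀ a b : A, C (fun i => P (σ i)) a b ↔ C P a b

/-- Strong unanimity. -/
def StrongUnanimity (C : (I → A → A → Prop) → A → A → Prop) : Prop :=
  (∀ P, IsPPOProfile P → ∀ a b : A, (∀ i, P i a b) → C P a b) ∧
  (∀ P, IsPPOProfile P → ∀ a b : A, (∀ i, P i a b) →
    (∃ j, StrictPref (P j) a b) → StrictPref (C P) a b)


section AuxArrow

variable {A I : Type*}

/-- Configuration decisiveness: every profile whose sets on the pair `(x,y)` are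
exactly `U` and `V` yields `C P x y`. -/
def DD (C : (I → A → A → Prop) → A → A → Prop) (x y : A) (U V : Set I) : Prop :=
  ∀ P : I → A → A → Prop, IsPPOProfile P → {i | P i x y} = U → {i | P i y x} = V → C P x y

def tri (x y z : A) (S1 S2 S3 S4 S5 S6 : Set I) : I → A → A → Prop :=
  fun i u v => u = v ∨ (u = x ∧ v = y ∧ i ∈ S1) ∨ (u = y ∧ v = x ∧ i ∈ S2)
    ∨ (u = y ∧ v = z ∧ i ∈ S3) ∨ (u = z ∧ v = y ∧ i ∈ S4)
    ∨ (u = x ∧ v = z ∧ i ∈ S5) ∨ (u = z ∧ v = x ∧ i ∈ S6)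

lemma tri_ppo {x y z : A} (hxy : x ≠ y) (hyz : y ≠ z) (hxz : x ≠ z)
    {S1 S2 S3 S4 S5 S6 : Set I}
    (c1 : S1 ∩ S3 ⊆ S5) (c2 : S5 ∩ S4 ⊆ S1) (c3 : S2 ∩ S5 ⊆ S3)
    (c4 : S3 ∩ S6 ⊆ S2) (c5 : S4 ∩ S2 ⊆ S6) (c6 : S6 ∩ S1 ⊆ S4) :
    IsPPOProfile (tri x y z S1 S2 S3 S4 S5 S6) := by
  intro i
  constructor
  · intro u; exact Or.inl rfl
  · rintro u v w h1 h2
    rcases h1 with rfl | ⟨rfl, rfl, h⟩ | ⟨rfl, rfl, h⟩ | ⟨rfl, rfl, h⟩ | ⟨rfl, rfl, h⟩ |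
      ⟨rfl, rfl, h⟩ | ⟨rfl, rfl, h⟩
    · exact h2
    all_goals rcases h2 with rfl | ⟨e, rfl, h'⟩ | ⟨e, rfl, h'⟩ | ⟨e, rfl, h'⟩ |
      ⟨e, rfl, h'⟩ | ⟨e, rfl, h'⟩ | ⟨e, rfl, h'⟩
    all_goals simp_all [tri]
    all_goals aesop

lemma tri_sets {x y z : A} (hxy : x ≠ y) (hyz : y ≠ z) (hxz : x ≠ z)
    (S1 S2 S3 S4 S5 S6 : Set I) :
    {i | tri x y z S1 S2 S3 S4 S5 S6 i x y} = S1 ∧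
    {i | tri x y z S1 S2 S3 S4 S5 S6 i y x} = S2 ∧
    {i | tri x y z S1 S2 S3 S4 S5 S6 i y z} = S3 ∧
    {i | tri x y z S1 S2 S3 S4 S5 S6 i z y} = S4 ∧
    {i | tri x y z S1 S2 S3 S4 S5 S6 i x z} = S5 ∧
    {i | tri x y z S1 S2 S3 S4 S5 S6 i z x} = S6 := by
  refine ⟨?_, ?_, ?_, ?_, ?_, ?_⟩ <;>
    · ext i
      simp [tri, hxy, hyz, hxz, Ne.symm hxy, Ne.symm hyz, Ne.symm hxz]

/-- The master combination lemma: build a profile on three alternatives, use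
transitivity of the social relation, and transfer by IIA. -/
lemma master {C : (I → A → A → Prop) → A → A → Prop}
    (hC : ∀ P, IsPPOProfile P → IsPPO (C P)) (hIIA : IIA C)
    {x y z : A} (hxy : x ≠ y) (hyz : y ≠ z) (hxz : x ≠ z)
    {S1 S2 S3 S4 S5 S6 : Set I}
    (c1 : S1 ∩ S3 ⊆ S5) (c2 : S5 ∩ S4 ⊆ S1) (c3 : S2 ∩ S5 ⊆ S3)
    (c4 : S3 ∩ S6 ⊆ S2) (c5 : S4 ∩ S2 ⊆ S6) (c6 : S6 ∩ S1 ⊆ S4)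
    (h1 : DD C x y S1 S2) (h2 : DD C y z S3 S4) : DD C x z S5 S6 := by
  have hR : IsPPOProfile (tri x y z S1 S2 S3 S4 S5 S6) :=
    tri_ppo hxy hyz hxz c1 c2 c3 c4 c5 c6
  obtain ⟨e1, e2, e3, e4, e5, e6⟩ := tri_sets (I := I) hxy hyz hxz S1 S2 S3 S4 S5 S6
  have hxyC := h1 _ hR e1 e2
  have hyzC := h2 _ hR e3 e4
  have hxzC : C (tri x y z S1 S2 S3 S4 S5 S6) x z := (hC _ hR).2 hxyC hyzC
  intro Q hQ q1 q2
  exact (hIIA Q _ hQ hR x z (q1.trans e5.symm) (q2.trans e6.symm)).mpr hxzC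

lemma DD_univ {C : (I → A → A → Prop) → A → A → Prop} (hU : Unanimity C)
    (x y : A) (V : Set I) : DD C x y Set.univ V := by
  intro P hP h1 _
  apply hU P hP x y
  intro i
  exact Set.eq_univ_iff_forall.mp h1 i

lemma DD_L1 {C : (I → A → A → Prop) → A → A → Prop}
    (hC : ∀ P, IsPPOProfile P → IsPPO (C P)) (hU : Unanimity C) (hIIA : IIA C)
    {x y z : A} (hxy : x ≠ y) (hyz : y ≠ z) (hxz : x ≠ z) {U V U' V' : Set I}
    (hUU' : U ⊆ U') (hV'V : V' ⊆ V) (h : DD C x y U V) : DD C x z U' V' :=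
  master hC hIIA hxy hyz hxz
    (fun _ hi => hUU' hi.1) (fun _ hi => hi.2.1) (fun i _ => Set.mem_univ i)
    (fun _ hi => hV'V hi.2) (fun _ hi => hi.1.2) (fun _ hi => Set.mem_inter hi.2 hi.1)
    h (DD_univ hU y z (U ∩ V'))

lemma DD_L2 {C : (I → A → A → Prop) → A → A → Prop}
    (hC : ∀ P, IsPPOProfile P → IsPPO (C P)) (hU : Unanimity C) (hIIA : IIA C)
    {x y z : A} (hxy : x ≠ y) (hyz : y ≠ z) (hxz : x ≠ z) {U V U' V' : Set I}
    (hUU' : U ⊆ U') (hV'V : V' ⊆ V) (h : DD C y z U V) : DD C x z U' V' :=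
  master hC hIIA hxy hyz hxz
    (fun _ hi => hUU' hi.2) (fun i _ => Set.mem_univ i) (fun _ hi => hi.1.1)
    (fun _ hi => hi) (fun _ hi => hi.2.2) (fun _ hi => hV'V hi.1)
    (DD_univ hU x y (U ∩ V')) h

lemma spare (hA : ThreeAlts A) (x y : A) : ∃ z : A, z ≠ x ∧ z ≠ y := by
  obtain ⟨a, b, c, hab, hbc, hac⟩ := hA
  by_cases hax : a = x
  · subst hax
    by_cases hby : b = y
    · subst hby; exact ⟨c, Ne.symm hac, Ne.symm hbc⟩
    · exact ⟨b, Ne.symm hab, hby⟩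
  · by_cases hay : a = y
    · subst hay
      by_cases hbx : b = x
      · subst hbx; exact ⟨c, Ne.symm hbc, Ne.symm hac⟩
      · exact ⟨b, hbx, Ne.symm hab⟩
    · exact ⟨a, hax, hay⟩

/-- Transfer of configuration decisiveness between arbitrary pairs, with
monotone growth of the supporting set and shrinking of the opposing set. -/
lemma DD_move {C : (I → A → A → Prop) → A → A → Prop}
    (hC : ∀ P, IsPPOProfile P → IsPPO (C P)) (hU : Unanimity C) (hIIA : IIA C)
    (hA : ThreeAlts A) {x y x' y' : A} (hxy : x ≠ y) (hxy' : x' ≠ y')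
    {U V U' V' : Set I} (hUU' : U ⊆ U') (hV'V : V' ⊆ V)
    (h : DD C x y U V) : DD C x' y' U' V' := by
  by_cases hx : x' = x
  · subst hx
    by_cases hy : y' = y
    · subst hy
      obtain ⟨z, hz1, hz2⟩ := spare hA x' y'
      have s1 : DD C x' z U' V' :=
        DD_L1 hC hU hIIA hxy' (Ne.symm hz2) (Ne.symm hz1) hUU' hV'V h
      exact DD_L1 hC hU hIIA (Ne.symm hz1) hz2 hxy' (subset_refl _) (subset_refl _) s1
    · exact DD_L1 hC hU hIIA hxy (fun he => hy he.symm) hxy' hUU' hV'V h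
  · by_cases hy : y' = y
    · subst hy
      exact DD_L2 hC hU hIIA hx hxy hxy' hUU' hV'V h
    · by_cases hx'y : x' = y
      · subst hx'y
        by_cases hy'x : y' = x
        · subst hy'x
          obtain ⟨z, hz1, hz2⟩ := spare hA y' x'
          have s1 : DD C y' z U V :=
            DD_L1 hC hU hIIA hxy (Ne.symm hz2) (Ne.symm hz1)
              (subset_refl _) (subset_refl _) h
          have s2 : DD C x' z U V :=
            DD_L2 hC hU hIIA hxy' (Ne.symm hz1) (Ne.symm hz2)
              (subset_refl _) (subset_refl _) s1
          exact DD_L1 hC hU hIIA (Ne.symm hz2) hz1 hxy' hUU' hV'V s2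
        · have s1 : DD C x y' U V :=
            DD_L1 hC hU hIIA hxy hxy' (fun he => hy'x he.symm)
              (subset_refl _) (subset_refl _) h
          exact DD_L2 hC hU hIIA (Ne.symm hxy) (fun he => hy'x he.symm)
            hxy' hUU' hV'V s1
      · have s1 : DD C x' y U V :=
          DD_L2 hC hU hIIA hx hxy hx'y (subset_refl _) (subset_refl _) h
        by_cases hy'x : y' = x
        · subst hy'x
          exact DD_L1 hC hU hIIA hx'y (Ne.symm hxy) hxy' hUU' hV'V s1
        · exact DD_L1 hC hU hIIA hx'y (fun he => hy he.symm) hxy' hUU' hV'V s1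

lemma DD_perm {C : (I → A → A → Prop) → A → A → Prop} (hAnon : Anonymity C)
    (σ : Equiv.Perm I) {x y : A} {U V : Set I}
    (hD : DD C x y U V) : DD C x y (⇑σ ⁻¹' U) (⇑σ ⁻¹' V) := by
  intro Q hQ h1 h2
  have hP : IsPPOProfile (fun i => Q (σ.symm i)) := fun i => hQ _
  have e1 : {i | Q (σ.symm i) x y} = U := by
    ext i; simpa using Set.ext_iff.mp h1 (σ.symm i)
  have e2 : {i | Q (σ.symm i) y x} = V := by
    ext i; simpa using Set.ext_iff.mp h2 (σ.symm i)
  have key := hD _ hP e1 e2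
  have h3 := hAnon σ (fun i => Q (σ.symm i)) hP x y
  simp only [Equiv.symm_apply_apply] at h3
  exact h3.mpr key

lemma DD_shrink [Fintype I] {C : (I → A → A → Prop) → A → A → Prop}
    (hC : ∀ P, IsPPOProfile P → IsPPO (C P)) (hU : Unanimity C) (hIIA : IIA C)
    (hAnon : Anonymity C) (hA : ThreeAlts A)
    {a b c : A} (hab : a ≠ b) (hbc : b ≠ c) (hac : a ≠ c) {j : I} :
    ∀ n (U V : Set I), U.ncard ≤ n → j ∉ U → DD C a b U V →
      ∃ V', DD C a b (∅ : Set I) V' := by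
  classical
  intro n
  induction n with
  | zero =>
    intro U V hcard hj hD
    have : U = ∅ := Set.ncard_eq_zero (Set.toFinite U) |>.mp (Nat.le_zero.mp hcard)
    exact ⟨V, this ▸ hD⟩
  | succ n ih =>
    intro U V hcard hj hD
    rcases Set.eq_empty_or_nonempty U with rfl | ⟨u, hu⟩
    · exact ⟨V, hD⟩
    · set σ := Equiv.swap u j with hσ
      have hD2 : DD C a b (⇑σ ⁻¹' U) (⇑σ ⁻¹' V) := DD_perm hAnon σ hD
      have hD3 : DD C b c (⇑σ ⁻¹' U) (⇑σ ⁻¹' V) :=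
        DD_move hC hU hIIA hA hab hbc (subset_refl _) (subset_refl _) hD2
      have hD4 : DD C a c (U ∩ ⇑σ ⁻¹' U) (V ∩ ⇑σ ⁻¹' V) :=
        master hC hIIA hab hbc hac
          (subset_refl _) (fun _ hi => hi.1.1) (fun _ hi => hi.2.2)
          (fun _ hi => hi.2.1) (fun _ hi => ⟨hi.2, hi.1⟩) (fun _ hi => hi.1.2)
          hD hD3
      have hD5 : DD C a b (U ∩ ⇑σ ⁻¹' U) (V ∩ ⇑σ ⁻¹' V) :=
        DD_move hC hU hIIA hA hac hab (subset_refl _) (subset_refl _) hD4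
      have hEq : U ∩ ⇑σ ⁻¹' U = U \ {u} := by
        ext i
        simp only [Set.mem_inter_iff, Set.mem_preimage, Set.mem_diff,
          Set.mem_singleton_iff]
        constructor
        · rintro ⟨hiU, hiU'⟩
          refine ⟨hiU, ?_⟩
          rintro rfl
          rw [hσ, Equiv.swap_apply_left] at hiU'
          exact hj hiU'
        · rintro ⟨hiU, hiu⟩
          refine ⟨hiU, ?_⟩
          rw [hσ, Equiv.swap_apply_of_ne_of_ne hiu (by rintro rfl; exact hj hiU)]
          exact hiU
      rw [hEq] at hD5
      have hcard' : (U \ {u}).ncard ≤ n := by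
        have := Set.ncard_diff_singleton_lt_of_mem hu (Set.toFinite U)
        omega
      exact ih (U \ {u}) (V ∩ ⇑σ ⁻¹' V) hcard' (fun hm => hj hm.1) hD5

lemma key_trivial [Fintype I] {C : (I → A → A → Prop) → A → A → Prop}
    (hA : ThreeAlts A) (hC : ∀ P, IsPPOProfile P → IsPPO (C P))
    (hU : Unanimity C) (hIIA : IIA C) (hAnon : Anonymity C)
    (hex : ∃ P : I → A → A → Prop, IsPPOProfile P ∧
      ∃ x y : A, C P x y ∧ ∃ i, ¬ P i x y) :
    ∀ P : I → A → A → Prop, IsPPOProfile P → ∀ x y : A, C P x y := by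
  obtain ⟨P, hP, x, y, hCxy, j, hj⟩ := hex
  have hxy : x ≠ y := by rintro rfl; exact hj ((hP j).1 x)
  obtain ⟨a, b, c, hab, hbc, hac⟩ := hA
  have hDxy : DD C x y {i | P i x y} {i | P i y x} := by
    intro Q hQ h1 h2
    exact (hIIA Q P hQ hP x y h1 h2).mpr hCxy
  have hDab : DD C a b {i | P i x y} {i | P i y x} :=
    DD_move hC hU hIIA ⟨a, b, c, hab, hbc, hac⟩ hxy hab
      (subset_refl _) (subset_refl _) hDxy
  obtain ⟨V', hV'⟩ := DD_shrink hC hU hIIA hAnon ⟨a, b, c, hab, hbc, hac⟩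
    hab hbc hac _ _ _ (le_refl _) hj hDab
  have h2 : DD C b c (∅ : Set I) V' :=
    DD_move hC hU hIIA ⟨a, b, c, hab, hbc, hac⟩ hab hbc
      (subset_refl _) (subset_refl _) hV'
  have h3 : DD C a c (∅ : Set I) Set.univ :=
    master hC hIIA hab hbc hac
      (fun _ hi => hi.1) (fun _ hi => hi.1) (fun _ hi => hi.2)
      (fun _ hi => absurd hi.1 (Set.notMem_empty _))
      (fun i _ => Set.mem_univ i)
      (fun _ hi => absurd hi.2 (Set.notMem_empty _))
      hV' h2
  intro Q hQ u v
  by_cases huv : u = v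
  · subst huv; exact (hC Q hQ).1 u
  · exact DD_move hC hU hIIA ⟨a, b, c, hab, hbc, hac⟩ hac huv
      (Set.empty_subset _) (Set.subset_univ _) h3 Q hQ rfl rfl

end AuxArrow

theorem anonymous_arrovian_classification [Fintype I] (C : (I → A → A → Prop) → A → A → Prop)
    (hA : ThreeAlts A)
    (hC : ∀ P, IsPPOProfile P → IsPPO (C P))
    (hU : Unanimity C) (hIIA : IIA C)
    (hAnon : Anonymity C) :
    ((∀ P : I → A → A → Prop, IsPPOProfile P → ∀ a b : A, C P a b) ∨
      (∀ P : I → A → A → Prop, IsPPOProfile P → ∀ a b : A, C P a b ↔ ∀ i, P i a b)) ∧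
    (StrongUnanimity C →
      ∀ P : I → A → A → Prop, IsPPOProfile P → ∀ a b : A, C P a b ↔ ∀ i, P i a b) := by
  constructor
  · by_cases hex : ∃ P : I → A → A → Prop, IsPPOProfile P ∧
      ∃ x y : A, C P x y ∧ ∃ i, ¬ P i x y
    · exact Or.inl (key_trivial hA hC hU hIIA hAnon hex)
    · push_neg at hex
      refine Or.inr fun P hP a b => ⟨fun hc i => hex P hP a b hc i, hU P hP a b⟩
  · intro hSU
    by_cases hex : ∃ P : I → A → A → Prop, IsPPOProfile P ∧
      ∃ x y : A, C P x y ∧ ∃ i, ¬ P i x y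
    · exfalso
      obtain ⟨P0, hP0, x0, y0, hc0, j0, hj0⟩ := hex
      have triv := key_trivial hA hC hU hIIA hAnon ⟨P0, hP0, x0, y0, hc0, j0, hj0⟩
      obtain ⟨a, b, _, hab, _, _⟩ := hA
      have hQ : IsPPOProfile (fun (_ : I) (u v : A) => u = v ∨ (u = a ∧ v = b)) := by
        intro i
        constructor
        · intro u; exact Or.inl rfl
        · rintro u v w (rfl | ⟨rfl, rfl⟩) h2
          · exact h2
          · rcases h2 with rfl | ⟨h, -⟩
            · exact Or.inr ⟨rfl, rfl⟩
            · exact absurd h (Ne.symm hab)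
      have hstrict := hSU.2 _ hQ a b (fun i => Or.inr ⟨rfl, rfl⟩)
        ⟨j0, Or.inr ⟨rfl, rfl⟩, by rintro (h | ⟨h, -⟩) <;> exact hab h.symm⟩
      exact hstrict.2 (triv _ hQ b a)
    · push_neg at hex
      exact fun P hP a b => ⟨fun hc i => hex P hP a b hc i, hU P hP a b⟩
end
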